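/- Let N ≥ 2, g ≥ 1, let a_0, …, a_{Ng−1} be complex numbers (a_j := 0 outside {0,…,Ng−1}), and define the trigonometric polynomial m_0(z) = (1/√N) Σ_{k=0}^{Ng−1} a_k z^k for z on the unit circle 𝕋. Then the following are equivalent: (i) Σ_{k∈ℤ} a_{k+Nl} · conj(a_k) = N·δ_{0,l} for all l ∈ ℤ; (ii) Σ_{k=0}^{N−1} |m_0(z·e^{2πik/N})|² = N for all z ∈ 𝕋. -/

import Mathlib

open MeasureTheory Complex Real
open scoped ComplexConjugate

noncomputable section

/-- For `m₀(z) = N^{-1/2} ∑_{k=0}^{Ng−1} aₖ zᵏ`, the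
orthogonality relations `∑ₖ a_{k+Nl} a̅ₖ = N δ_{0,l}` hold if and only if the
QMF condition `∑_{k=0}^{N−1} |m₀(z e^{2πik/N})|² = N` holds for all `z ∈ 𝕋`. -/
lemma expsum (N : ℕ) (hN : 0 < N) (d : ℤ) :
    ∑ k ∈ Finset.range N, Complex.exp (2 * π * Complex.I * k * d / N)
      = if (N : ℤ) ∣ d then (N : ℂ) else 0 := by
  have hNC : (N : ℂ) ≠ 0 := Nat.cast_ne_zero.mpr hN.ne'
  have hx : ∀ k : ℕ, Complex.exp (2 * π * Complex.I * k * d / N)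
      = Complex.exp (2 * π * Complex.I * d / N) ^ k := by
    intro k
    rw [← Complex.exp_nat_mul]
    congr 1; push_cast; ring
  simp_rw [hx]
  set x := Complex.exp (2 * π * Complex.I * d / N) with hxdef
  have hprim := Complex.isPrimitiveRoot_exp N hN.ne'
  have hxz : x = Complex.exp (2 * π * Complex.I / N) ^ d := by
    rw [hxdef, ← Complex.exp_int_mul]; congr 1; push_cast; ring
  by_cases hdvd : (N : ℤ) ∣ d
  · have hx1 : x = 1 := by
      rw [hxz, (hprim.zpow_eq_one_iff_dvd d).mpr hdvd]
    simp [hx1, hdvd]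
  · have hx1 : x ≠ 1 := by
      rw [hxz]; exact fun h => hdvd ((hprim.zpow_eq_one_iff_dvd d).mp h)
    have hxN : x ^ N = 1 := by
      rw [hxdef, ← Complex.exp_nat_mul]
      have h2 : (N : ℂ) * (2 * π * Complex.I * d / N) = d * (2 * π * Complex.I) := by
        field_simp
      rw [h2, Complex.exp_int_mul_two_pi_mul_I]
    rw [geom_sum_eq hx1, hxN]
    simp [hdvd]

lemma perpoint (N g : ℕ) (hN : 2 ≤ N) (a : ℤ → ℂ)
    (m0 : ℂ → ℂ)
    (hm0 : ∀ z : ℂ, m0 z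
      = ((Real.sqrt N : ℂ))⁻¹ * ∑ k ∈ Finset.range (N * g), a (k : ℤ) * z ^ k)
    (z : ℂ) (hz : ‖z‖ = 1) (k : ℕ) :
    m0 (z * Complex.exp (2 * π * Complex.I * k / N)) *
      conj (m0 (z * Complex.exp (2 * π * Complex.I * k / N))) * z ^ (N * g - 1)
    = ∑ j ∈ Finset.range (N * g), ∑ j' ∈ Finset.range (N * g),
        (N : ℂ)⁻¹ * (a (j : ℤ) * conj (a (j' : ℤ)) * z ^ (j + (N * g - 1 - j'))
          * Complex.exp (2 * π * Complex.I * k * ((j : ℤ) - (j' : ℤ)) / N)) := by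
  have hN0 : 0 < N := by omega
  set u := Complex.exp (2 * π * Complex.I * k / N) with hu
  have hzc : z * conj z = 1 := by
    rw [Complex.mul_conj, Complex.normSq_eq_norm_sq, hz]
    norm_num
  have hcu : conj u = Complex.exp (-(2 * π * Complex.I * k / N)) := by
    rw [hu, ← Complex.exp_conj]
    congr 1
    simp [map_div₀, map_mul, Complex.conj_I, Complex.conj_ofReal, map_ofNat]
    ring
  have hNs : ((Real.sqrt N : ℂ))⁻¹ * conj ((Real.sqrt N : ℂ))⁻¹ = (N : ℂ)⁻¹ := by
    rw [map_inv₀, Complex.conj_ofReal, ← mul_inv, ← Complex.ofReal_mul,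
      Real.mul_self_sqrt (Nat.cast_nonneg N), Complex.ofReal_natCast]
  rw [hm0, map_mul, map_sum]
  calc ((Real.sqrt N : ℂ))⁻¹ * (∑ j ∈ Finset.range (N*g), a (j:ℤ) * (z*u) ^ j) *
        (conj ((Real.sqrt N : ℂ))⁻¹ * ∑ j' ∈ Finset.range (N*g), conj (a (j':ℤ) * (z*u) ^ j')) *
        z ^ (N*g-1)
      = (N:ℂ)⁻¹ * ((∑ j ∈ Finset.range (N*g), a (j:ℤ) * (z*u) ^ j) *
          ∑ j' ∈ Finset.range (N*g), conj (a (j':ℤ) * (z*u) ^ j')) * z ^ (N*g-1) := by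
        rw [← hNs]; ring
    _ = (N:ℂ)⁻¹ * (∑ j ∈ Finset.range (N*g), ∑ j' ∈ Finset.range (N*g),
          (a (j:ℤ) * (z*u) ^ j) * conj (a (j':ℤ) * (z*u) ^ j')) * z ^ (N*g-1) := by
        rw [Finset.sum_mul_sum]
    _ = ∑ j ∈ Finset.range (N*g), ∑ j' ∈ Finset.range (N*g),
          (N:ℂ)⁻¹ * ((a (j:ℤ) * (z*u) ^ j) * conj (a (j':ℤ) * (z*u) ^ j') * z ^ (N*g-1)) := by
        rw [Finset.mul_sum, Finset.sum_mul]
        refine Finset.sum_congr rfl fun j _ => ?_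
        rw [Finset.mul_sum, Finset.sum_mul]
        refine Finset.sum_congr rfl fun j' _ => ?_
        ring
    _ = _ := by
        refine Finset.sum_congr rfl fun j hj => Finset.sum_congr rfl fun j' hj' => ?_
        congr 1
        have hj'lt := Finset.mem_range.mp hj'
        have hpow : z ^ (N*g-1) = z ^ j' * z ^ (N*g-1-j') := by
          rw [← pow_add]; congr 1; omega
        rw [map_mul, map_pow, map_mul, hcu, hpow]
        calc a (j:ℤ) * (z*u)^j * ((conj (a (j':ℤ))) * (conj z * Complex.exp (-(2*π*Complex.I*k/N)))^j') *
              (z ^ j' * z ^ (N*g-1-j'))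
            = a (j:ℤ) * conj (a (j':ℤ)) * ((z * conj z)^j' * (z^j * z^(N*g-1-j'))) *
              (u^j * Complex.exp (-(2*π*Complex.I*k/N))^j') := by
              rw [mul_pow, mul_pow]; ring
          _ = a (j:ℤ) * conj (a (j':ℤ)) * z ^ (j + (N*g-1-j')) *
              Complex.exp (2*π*Complex.I*k*((j:ℤ)-(j':ℤ))/N) := by
              rw [hzc, one_pow, one_mul, ← pow_add, hu, ← Complex.exp_nat_mul, ← Complex.exp_nat_mul,
                ← Complex.exp_add]
              congr 2
              push_cast
              ring

lemma perj' (N g : ℕ) (hN : 2 ≤ N) (hg : 1 ≤ g) (a : ℤ → ℂ)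
    (hsupp : ∀ j : ℤ, (j < 0 ∨ (N * g : ℤ) ≤ j) → a j = 0)
    (z : ℂ) (j' : ℕ) (hj' : j' ∈ Finset.range (N * g)) :
    ∑ j ∈ Finset.range (N * g),
      (if (N:ℤ) ∣ ((j:ℤ) - (j':ℤ)) then a (j:ℤ) * conj (a (j':ℤ)) * z ^ (j + (N*g-1-j')) else 0)
    = ∑ l ∈ Finset.Icc (1 - (g:ℤ)) ((g:ℤ) - 1),
        a ((j':ℤ) + N*l) * conj (a (j':ℤ)) * z ^ (((N*g-1 : ℕ):ℤ) + N*l).toNat := by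
  have hN0 : (0:ℤ) < N := by exact_mod_cast (by omega : 0 < N)
  have hNg : ((N*g : ℕ) : ℤ) = (N:ℤ) * g := by push_cast; ring
  have hj'lt : j' < N * g := Finset.mem_range.mp hj'
  rw [← Finset.sum_filter]
  rw [← Finset.sum_subset
    (Finset.filter_subset (fun l => 0 ≤ (j':ℤ) + N*l ∧ (j':ℤ) + N*l < N*g) _)
    (by
      intro l hlIcc hl
      rw [Finset.mem_filter] at hl
      push_neg at hl
      have hz0 : a ((j':ℤ) + N*l) = 0 := by
        apply hsupp
        by_cases h0 : 0 ≤ (j':ℤ) + N*l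
        · right; exact hl hlIcc h0
        · left; omega
      simp [hz0])]
  refine Finset.sum_nbij' (fun j => ((j:ℤ) - (j':ℤ)) / N) (fun l => ((j':ℤ) + N*l).toNat)
    ?_ ?_ ?_ ?_ ?_
  · intro j hj
    rw [Finset.mem_filter] at hj
    obtain ⟨hjr, hdvd⟩ := hj
    have hjlt : j < N * g := Finset.mem_range.mp hjr
    obtain ⟨l, hl⟩ := hdvd
    rw [Finset.mem_filter, Finset.mem_Icc]
    rw [hl, Int.mul_ediv_cancel_left _ hN0.ne']
    have hb1 : (N:ℤ) * l < N * g := by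
      rw [← hNg]; omega
    have hb2 : (N:ℤ) * (-l) < N * g := by
      rw [mul_neg, ← hNg]; omega
    have hl1 : l < g := lt_of_mul_lt_mul_left hb1 hN0.le
    have hl2 : -l < g := lt_of_mul_lt_mul_left hb2 hN0.le
    refine ⟨⟨by omega, by omega⟩, by omega, by rw [← hNg]; omega⟩
  · intro l hl
    rw [Finset.mem_filter] at hl
    rw [Finset.mem_filter, Finset.mem_range]
    obtain ⟨_, h0, hlt⟩ := hl
    constructor
    · omega
    · rw [Int.toNat_of_nonneg h0]
      exact ⟨l, by ring⟩
  · intro j hj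
    rw [Finset.mem_filter] at hj
    obtain ⟨l, hl⟩ := hj.2
    rw [hl, Int.mul_ediv_cancel_left _ hN0.ne']
    omega
  · intro l hl
    rw [Finset.mem_filter] at hl
    obtain ⟨-, h0, -⟩ := hl
    rw [Int.toNat_of_nonneg h0]
    rw [add_sub_cancel_left, Int.mul_ediv_cancel_left _ hN0.ne']
  · intro j hj
    rw [Finset.mem_filter] at hj
    have hjlt : j < N * g := Finset.mem_range.mp hj.1
    obtain ⟨l, hl⟩ := hj.2
    rw [hl, Int.mul_ediv_cancel_left _ hN0.ne']
    have h1 : ((j:ℕ):ℤ) = (j':ℤ) + (N:ℤ)*l := by omega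
    rw [← h1]
    congr 2
    omega

lemma key (N g : ℕ) (hN : 2 ≤ N) (hg : 1 ≤ g) (a : ℤ → ℂ)
    (hsupp : ∀ j : ℤ, (j < 0 ∨ (N * g : ℤ) ≤ j) → a j = 0)
    (m0 : ℂ → ℂ)
    (hm0 : ∀ z : ℂ, m0 z
      = ((Real.sqrt N : ℂ))⁻¹ * ∑ k ∈ Finset.range (N * g), a (k : ℤ) * z ^ k)
    (z : ℂ) (hz : ‖z‖ = 1) :
    (∑ k ∈ Finset.range N, m0 (z * Complex.exp (2 * π * Complex.I * k / N)) *
        conj (m0 (z * Complex.exp (2 * π * Complex.I * k / N)))) * z ^ (N * g - 1)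
    = ∑ l ∈ Finset.Icc (1 - (g:ℤ)) ((g:ℤ) - 1),
        (∑ k ∈ Finset.range (N * g), a ((k:ℤ) + N*l) * conj (a (k:ℤ))) *
          z ^ (((N*g-1 : ℕ):ℤ) + N*l).toNat := by
  have hN0 : 0 < N := by omega
  have hNC : (N:ℂ) ≠ 0 := Nat.cast_ne_zero.mpr hN0.ne'
  rw [Finset.sum_mul]
  calc ∑ k ∈ Finset.range N, m0 (z * Complex.exp (2 * π * Complex.I * k / N)) *
        conj (m0 (z * Complex.exp (2 * π * Complex.I * k / N))) * z ^ (N*g-1)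
      = ∑ k ∈ Finset.range N, ∑ j ∈ Finset.range (N*g), ∑ j' ∈ Finset.range (N*g),
          (N : ℂ)⁻¹ * (a (j:ℤ) * conj (a (j':ℤ)) * z ^ (j + (N*g-1-j'))
            * Complex.exp (2 * π * Complex.I * k * ((j:ℤ) - (j':ℤ)) / N)) :=
        Finset.sum_congr rfl fun k _ => perpoint N g hN a m0 hm0 z hz k
    _ = ∑ j ∈ Finset.range (N*g), ∑ j' ∈ Finset.range (N*g), ∑ k ∈ Finset.range N,
          (N : ℂ)⁻¹ * (a (j:ℤ) * conj (a (j':ℤ)) * z ^ (j + (N*g-1-j'))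
            * Complex.exp (2 * π * Complex.I * k * ((j:ℤ) - (j':ℤ)) / N)) := by
        rw [Finset.sum_comm]
        exact Finset.sum_congr rfl fun j _ => Finset.sum_comm
    _ = ∑ j ∈ Finset.range (N*g), ∑ j' ∈ Finset.range (N*g),
          (if (N:ℤ) ∣ ((j:ℤ) - (j':ℤ)) then a (j:ℤ) * conj (a (j':ℤ)) * z ^ (j + (N*g-1-j')) else 0) := by
        refine Finset.sum_congr rfl fun j _ => Finset.sum_congr rfl fun j' _ => ?_
        rw [Finset.sum_congr rfl (fun k _ =>
          (mul_assoc _ _ _).symm : ∀ k ∈ Finset.range N,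
            (N : ℂ)⁻¹ * (a (j:ℤ) * conj (a (j':ℤ)) * z ^ (j + (N*g-1-j'))
              * Complex.exp (2 * π * Complex.I * k * ((j:ℤ) - (j':ℤ)) / N))
            = ((N : ℂ)⁻¹ * (a (j:ℤ) * conj (a (j':ℤ)) * z ^ (j + (N*g-1-j'))))
              * Complex.exp (2 * π * Complex.I * k * ((j:ℤ) - (j':ℤ)) / N))]
        have hsum := expsum N hN0 ((j:ℤ) - (j':ℤ))
        push_cast at hsum
        rw [← Finset.mul_sum]
        push_cast
        rw [hsum]
        split_ifs with h
        · field_simp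
        · rw [mul_zero]
    _ = ∑ j' ∈ Finset.range (N*g), ∑ j ∈ Finset.range (N*g),
          (if (N:ℤ) ∣ ((j:ℤ) - (j':ℤ)) then a (j:ℤ) * conj (a (j':ℤ)) * z ^ (j + (N*g-1-j')) else 0) :=
        Finset.sum_comm
    _ = ∑ j' ∈ Finset.range (N*g), ∑ l ∈ Finset.Icc (1 - (g:ℤ)) ((g:ℤ) - 1),
          a ((j':ℤ) + N*l) * conj (a (j':ℤ)) * z ^ (((N*g-1 : ℕ):ℤ) + N*l).toNat :=
        Finset.sum_congr rfl fun j' hj' => perj' N g hN hg a hsupp z j' hj'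
    _ = ∑ l ∈ Finset.Icc (1 - (g:ℤ)) ((g:ℤ) - 1), ∑ j' ∈ Finset.range (N*g),
          a ((j':ℤ) + N*l) * conj (a (j':ℤ)) * z ^ (((N*g-1 : ℕ):ℤ) + N*l).toNat :=
        Finset.sum_comm
    _ = _ := Finset.sum_congr rfl fun l _ => (Finset.sum_mul _ _ _).symm

lemma circle_inf : Set.Infinite {z : ℂ | ‖z‖ = 1} := by
  apply Set.infinite_of_injOn_mapsTo (f := fun t : ℝ => Complex.exp (t * Complex.I))
    (s := Set.Ioo (0:ℝ) 1)
  · intro t ht s hs hts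
    simp only at hts
    rw [Complex.exp_eq_exp_iff_exists_int] at hts
    obtain ⟨n, hn⟩ := hts
    have h2 : (t : ℂ) = s + n * (2 * π) := by
      have hI : ((t : ℂ) - s - n * (2 * π)) * Complex.I = 0 := by
        rw [sub_mul, sub_mul, hn]; ring
      have := (mul_eq_zero.mp hI).resolve_right Complex.I_ne_zero
      linear_combination this
    have h3 : t = s + n * (2 * π) := by exact_mod_cast h2
    have hpi := Real.pi_gt_three
    obtain ⟨ht0, ht1⟩ := ht
    obtain ⟨hs0, hs1⟩ := hs
    have hn0 : n = 0 := by
      rcases lt_trichotomy n 0 with h | h | h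
      · exfalso
        have : (n : ℝ) ≤ -1 := by exact_mod_cast Int.le_sub_one_of_lt h
        nlinarith
      · exact h
      · exfalso
        have : (1 : ℝ) ≤ n := by exact_mod_cast h
        nlinarith
    rw [hn0] at h3
    simpa using h3
  · intro t _
    simp only [Set.mem_setOf_eq]
    exact Complex.norm_exp_ofReal_mul_I t
  · exact Set.Ioo_infinite (by norm_num : (0:ℝ) < 1)

lemma htsum (N g : ℕ) (a : ℤ → ℂ)
    (hsupp : ∀ j : ℤ, (j < 0 ∨ (N * g : ℤ) ≤ j) → a j = 0) (l : ℤ) :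
    ∑' k : ℤ, a (k + N * l) * conj (a k)
      = ∑ k ∈ Finset.range (N * g), a ((k:ℤ) + N * l) * conj (a (k:ℤ)) := by
  rw [tsum_eq_sum (s := (Finset.range (N * g)).map ⟨(fun n : ℕ => (n : ℤ)), fun x y h => by simpa using h⟩)]
  · rw [Finset.sum_map]
    rfl
  · intro k hk
    simp only [Finset.mem_map, Finset.mem_range, Function.Embedding.coeFn_mk] at hk
    push_neg at hk
    have hak : a k = 0 := by
      apply hsupp
      by_cases h0 : 0 ≤ k
      · right
        have := hk k.toNat
        replace this : k.toNat < N * g → ((k.toNat : ℕ) : ℤ) ≠ k := this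
        push_cast
        omega
      · left; omega
    simp [hak]

lemma hcvanish (N g : ℕ) (hN : 2 ≤ N) (a : ℤ → ℂ)
    (hsupp : ∀ j : ℤ, (j < 0 ∨ (N * g : ℤ) ≤ j) → a j = 0) (l : ℤ)
    (hl : l ∉ Finset.Icc (1 - (g:ℤ)) ((g:ℤ) - 1)) :
    ∑ k ∈ Finset.range (N * g), a ((k:ℤ) + N * l) * conj (a (k:ℤ)) = 0 := by
  have hN0 : (0:ℤ) < N := by exact_mod_cast (by omega : 0 < N)
  rw [Finset.mem_Icc] at hl
  push_neg at hl
  apply Finset.sum_eq_zero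
  intro k hk
  have hklt : k < N * g := Finset.mem_range.mp hk
  have hak : a ((k:ℤ) + N * l) = 0 := by
    apply hsupp
    by_cases hc : 1 - (g:ℤ) ≤ l
    · -- then l ≥ g
      have hgl : (g:ℤ) ≤ l := by have := hl hc; omega
      right
      have h1 : (N:ℤ) * g ≤ N * l := by
        exact mul_le_mul_of_nonneg_left hgl hN0.le
      push_cast
      omega
    · -- l ≤ -g
      left
      have hgl : l ≤ -(g:ℤ) := by omega
      have h1 : (N:ℤ) * l ≤ N * (-(g:ℤ)) := mul_le_mul_of_nonneg_left hgl hN0.le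
      have h2 : ((k:ℕ):ℤ) < ((N*g : ℕ):ℤ) := by exact_mod_cast hklt
      push_cast at h2 ⊢
      nlinarith
  simp [hak]

theorem stmt4 (N g : ℕ) (hN : 2 ≤ N) (hg : 1 ≤ g) (a : ℤ → ℂ)
    (hsupp : ∀ j : ℤ, (j < 0 ∨ (N * g : ℤ) ≤ j) → a j = 0)
    (m0 : ℂ → ℂ)
    (hm0 : ∀ z : ℂ, m0 z
      = ((Real.sqrt N : ℂ))⁻¹ * ∑ k ∈ Finset.range (N * g), a (k : ℤ) * z ^ k) :
    (∀ l : ℤ, ∑' k : ℤ, a (k + N * l) * conj (a k)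
        = if l = 0 then (N : ℂ) else 0) ↔
    (∀ z : ℂ, ‖z‖ = 1 →
      ∑ k ∈ Finset.range N,
        ‖m0 (z * Complex.exp (2 * π * Complex.I * k / N))‖ ^ 2 = (N : ℝ)) := by
  have hN0 : 0 < N := by omega
  have hNg1 : 1 ≤ N * g := le_trans (by norm_num) (Nat.mul_le_mul hN hg)
  have hM : ((N*g-1 : ℕ):ℤ) = (N:ℤ)*g - 1 := by
    rw [Nat.cast_sub hNg1]; push_cast; ring
  have hepos : ∀ l : ℤ, 1 - (g:ℤ) ≤ l → 0 ≤ ((N*g-1 : ℕ):ℤ) + N*l := by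
    intro l hl
    have h1 : (N:ℤ)*(1-(g:ℤ)) ≤ N*l :=
      mul_le_mul_of_nonneg_left hl (by positivity)
    have h2 : (N:ℤ)*(1-(g:ℤ)) = N - N*g := by ring
    have h3 : (2:ℤ) ≤ N := by exact_mod_cast hN
    rw [hM]; linarith
  have he0 : ((((N*g-1:ℕ)):ℤ) + N*(0:ℤ)).toNat = N*g-1 := by simp
  have heinj : ∀ l : ℤ, 1 - (g:ℤ) ≤ l → ∀ l' : ℤ, 1 - (g:ℤ) ≤ l' →
      (((N*g-1 : ℕ):ℤ) + N*l).toNat = (((N*g-1 : ℕ):ℤ) + N*l').toNat → l = l' := by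
    intro l hl l' hl' he
    have h1 := hepos l hl
    have h2 := hepos l' hl'
    have h3 : ((N*g-1 : ℕ):ℤ) + N*l = ((N*g-1 : ℕ):ℤ) + N*l' := by omega
    have h4 : (N:ℤ)*l = N*l' := by omega
    exact mul_left_cancel₀ (by exact_mod_cast hN0.ne' : (N:ℤ) ≠ 0) h4
  have heM : ∀ l : ℤ, 1 - (g:ℤ) ≤ l →
      ((((N*g-1 : ℕ):ℤ) + N*l).toNat = N*g-1 ↔ l = 0) := by
    intro l hl
    constructor
    · intro h
      have h1 := hepos l hl
      have h2 : ((N*g-1 : ℕ):ℤ) + N*l = ((N*g-1:ℕ):ℤ) := by omega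
      have h4 : (N:ℤ)*l = 0 := by omega
      have := mul_eq_zero.mp h4
      rcases this with h | h
      · exfalso; exact (by exact_mod_cast hN0.ne' : (N:ℤ) ≠ 0) h
      · exact h
    · intro h; rw [h]; exact he0
  have hSz : ∀ z : ℂ,
      (∑ k ∈ Finset.range N, m0 (z * Complex.exp (2 * π * Complex.I * k / N)) *
        conj (m0 (z * Complex.exp (2 * π * Complex.I * k / N))))
      = (((∑ k ∈ Finset.range N,
          ‖m0 (z * Complex.exp (2 * π * Complex.I * k / N))‖ ^ 2 : ℝ)) : ℂ) := by
    intro z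
    push_cast
    refine Finset.sum_congr rfl fun k _ => ?_
    rw [Complex.mul_conj, Complex.normSq_eq_norm_sq]
    push_cast
    ring
  have h0mem : (0:ℤ) ∈ Finset.Icc (1 - (g:ℤ)) ((g:ℤ) - 1) := by
    rw [Finset.mem_Icc]
    constructor <;> [omega; omega] <;> skip
  constructor
  · intro h1 z hz
    have hz0 : z ≠ 0 := by
      intro h; rw [h] at hz; simp at hz
    have hc : ∀ l : ℤ, (∑ k ∈ Finset.range (N*g), a ((k:ℤ) + N*l) * conj (a (k:ℤ)))
        = if l = 0 then (N:ℂ) else 0 := by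
      intro l; rw [← htsum N g a hsupp l]; exact h1 l
    have hk := key N g hN hg a hsupp m0 hm0 z hz
    have hrhs : ∑ l ∈ Finset.Icc (1 - (g:ℤ)) ((g:ℤ) - 1),
        (∑ k ∈ Finset.range (N*g), a ((k:ℤ) + N*l) * conj (a (k:ℤ))) *
          z ^ (((N*g-1 : ℕ):ℤ) + N*l).toNat
        = (N:ℂ) * z ^ (N*g-1) := by
      rw [Finset.sum_eq_single_of_mem (0:ℤ) h0mem (fun l _ hl0 => by rw [hc l, if_neg hl0, zero_mul])]
      rw [hc 0, if_pos rfl, he0]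
    rw [hrhs] at hk
    have hS := mul_right_cancel₀ (pow_ne_zero (N*g-1) hz0) hk
    rw [hSz z] at hS
    exact_mod_cast hS
  · intro h2 l
    rw [htsum N g a hsupp l]
    set P : Polynomial ℂ :=
      (∑ l ∈ Finset.Icc (1 - (g:ℤ)) ((g:ℤ) - 1),
        Polynomial.C (∑ k ∈ Finset.range (N*g), a ((k:ℤ) + N*l) * conj (a (k:ℤ))) *
          Polynomial.X ^ ((((N*g-1 : ℕ):ℤ) + N*l).toNat))
      - Polynomial.C (N:ℂ) * Polynomial.X ^ (N*g-1) with hP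
    have hProot : ∀ z : ℂ, ‖z‖ = 1 → P.IsRoot z := by
      intro z hz
      have hk := key N g hN hg a hsupp m0 hm0 z hz
      have hSN : (∑ k ∈ Finset.range N, m0 (z * Complex.exp (2 * π * Complex.I * k / N)) *
          conj (m0 (z * Complex.exp (2 * π * Complex.I * k / N)))) = (N:ℂ) := by
        rw [hSz z, h2 z hz]
        norm_cast
      rw [hSN] at hk
      rw [Polynomial.IsRoot, hP]
      rw [Polynomial.eval_sub, Polynomial.eval_finset_sum]
      simp only [Polynomial.eval_mul, Polynomial.eval_C, Polynomial.eval_pow, Polynomial.eval_X]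
      rw [← hk]
      ring
    have hP0 : P = 0 := Polynomial.eq_zero_of_infinite_isRoot P
      (Set.Infinite.mono (fun z hz => hProot z hz) circle_inf)
    by_cases hlin : l ∈ Finset.Icc (1 - (g:ℤ)) ((g:ℤ) - 1)
    · have hlge : 1 - (g:ℤ) ≤ l := (Finset.mem_Icc.mp hlin).1
      have hco := congrArg (fun p => Polynomial.coeff p ((((N*g-1 : ℕ):ℤ) + N*l).toNat)) hP0
      simp only [hP, Polynomial.coeff_sub, Polynomial.coeff_zero, Polynomial.finset_sum_coeff,
        Polynomial.coeff_C_mul, Polynomial.coeff_X_pow] at hco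
      rw [Finset.sum_eq_single_of_mem l hlin (fun l' hl' hne => by
        rw [if_neg, mul_zero]
        intro h
        exact hne (heinj l' (Finset.mem_Icc.mp hl').1 l hlge h.symm))] at hco
      rw [if_pos rfl, mul_one] at hco
      by_cases hl0 : l = 0
      · rw [if_pos hl0]
        rw [if_pos (by rw [hl0]; exact he0 : ((((N*g-1 : ℕ):ℤ) + N*l).toNat = N*g-1)), mul_one] at hco
        linear_combination hco
      · rw [if_neg hl0]
        rw [if_neg (fun h => hl0 ((heM l hlge).mp h)), mul_zero, sub_zero] at hco
        exact hco
    · rw [hcvanish N g hN a hsupp l hlin]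
      have hl0 : l ≠ 0 := fun h => hlin (h ▸ h0mem)
      rw [if_neg hl0]
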